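/- Let n > 2 be an integer. Every submonoid of the monoid of all functions from Fin n to Fin n (under composition) that is generated by two elements is a proper submonoid; that is, for all f, g : Fin n → Fin n, the submonoid generated by {f, g} is not the whole monoid Fin n → Fin n. -/
import Mathlib

theorem aux_ne_top (n : ℕ) (hn : 2 < n) (f g : Function.End (Fin n))
    (hg : ¬ Function.Bijective g) : Submonoid.closure {f, g} ≠ ⊤ := by
  intro htop
  -- bijective elements of the closure are powers of f
  have hbij : ∀ h ∈ Submonoid.closure ({f, g} : Set (Function.End (Fin n))),
      Function.Bijective h → h ∈ Submonoid.closure ({f} : Set (Function.End (Fin n))) := by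
    intro h hh
    induction hh using Submonoid.closure_induction with
    | mem x hx =>
        intro hbx
        rcases hx with rfl | rfl
        · exact Submonoid.subset_closure rfl
        · exact absurd hbx hg
    | one => intro _; exact Submonoid.one_mem _
    | mul a b _ _ iha ihb =>
        intro hab
        have hbinj : Function.Injective b := Function.Injective.of_comp (f := a) hab.1
        have hasurj : Function.Surjective a := Function.Surjective.of_comp (g := b) hab.2
        have hb : Function.Bijective b := (Finite.injective_iff_bijective).1 hbinj
        have ha : Function.Bijective a := (Finite.surjective_iff_bijective).1 hasurj
        exact Submonoid.mul_mem _ (iha ha) (ihb hb)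
  set a : Fin n := ⟨0, by omega⟩
  set b : Fin n := ⟨1, by omega⟩
  set c : Fin n := ⟨2, by omega⟩
  have hab : a ≠ b := by simp [a, b, Fin.ext_iff]
  have hbc : b ≠ c := by simp [b, c, Fin.ext_iff]
  set σ : Function.End (Fin n) := ⇑(Equiv.swap a b) with hσ
  set τ : Function.End (Fin n) := ⇑(Equiv.swap b c) with hτ
  have hσm : σ ∈ Submonoid.closure ({f} : Set (Function.End (Fin n))) :=
    hbij σ (htop ▸ Submonoid.mem_top σ) (Equiv.swap a b).bijective
  have hτm : τ ∈ Submonoid.closure ({f} : Set (Function.End (Fin n))) :=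
    hbij τ (htop ▸ Submonoid.mem_top τ) (Equiv.swap b c).bijective
  obtain ⟨k, hk⟩ := Submonoid.mem_closure_singleton.1 hσm
  obtain ⟨m, hm⟩ := Submonoid.mem_closure_singleton.1 hτm
  have hcomm : σ * τ = τ * σ := by
    rw [← hk, ← hm, ← pow_add, ← pow_add, Nat.add_comm]
  have hac : a ≠ c := by simp [a, c, Fin.ext_iff]
  have h1 : (σ * τ) b = c := by
    show σ (τ b) = c
    rw [hτ, hσ]
    rw [Equiv.swap_apply_left, Equiv.swap_apply_of_ne_of_ne hac.symm hbc.symm]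
  have h2 : (τ * σ) b = a := by
    show τ (σ b) = a
    rw [hτ, hσ]
    rw [Equiv.swap_apply_right, Equiv.swap_apply_of_ne_of_ne hab hac]
  have : c = a := by rw [← h1, hcomm, h2]
  simp [a, c, Fin.ext_iff] at this

theorem stmt9 (n : ℕ) (hn : 2 < n) (f g : Function.End (Fin n)) :
    Submonoid.closure {f, g} ≠ ⊤ := by
  by_cases hg : Function.Bijective g
  · by_cases hf : Function.Bijective f
    · -- both bijective: closure contains only bijections
      intro htop
      have hbij : ∀ h ∈ Submonoid.closure ({f, g} : Set (Function.End (Fin n))),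
          Function.Bijective h := by
        intro h hh
        induction hh using Submonoid.closure_induction with
        | mem x hx => rcases hx with rfl | rfl <;> assumption
        | one => exact Function.bijective_id
        | mul a b _ _ iha ihb => exact iha.comp ihb
      set a : Fin n := ⟨0, by omega⟩
      set b : Fin n := ⟨1, by omega⟩
      have hab : a ≠ b := by simp [a, b, Fin.ext_iff]
      have := hbij (fun _ => a) (htop ▸ Submonoid.mem_top _)
      exact hab (this.1 (show (fun _ => a) a = (fun _ => a) b from rfl))
    · rw [Set.pair_comm]
      exact aux_ne_top n hn g f hf
  · exact aux_ne_top n hn f g hg
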